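/- Let n ≥ 1, let M be a real symmetric positive definite n×n matrix, let t > 0 be fixed, let Ω ⊆ ℝⁿ be a bounded measurable set and let h : ℝⁿ → ℝ be integrable on Ω. Then the Poisson-type integral x ↦ ∫_Ω Ψ_M(x,y,t)·h(y) dy is a real-analytic function of x on all of ℝⁿ. -/

import Mathlib

open Matrix MeasureTheory Bornology
open scoped Nat

/-- The Gaussian kernel `Ψ_M(x,y,s)` associated with a positive definite matrix `M`. -/
noncomputable def gaussKernel (n : ℕ) (M : Matrix (Fin n) (Fin n) ℝ)
    (x y : Fin n → ℝ) (s : ℝ) : ℝ :=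
  (2 * Real.sqrt (Real.pi * M.det * s)) ^ (-(n : ℤ)) *
    Real.exp (-((x - y) ⬝ᵥ (M⁻¹).mulVec (x - y)) / (4 * s))

namespace PoissonAux

variable {n : ℕ}

lemma abs_dotProduct_le (x v : Fin n → ℝ) : |x ⬝ᵥ v| ≤ ‖x‖ * ∑ i, |v i| := by
  calc |x ⬝ᵥ v| ≤ ∑ i, |x i * v i| := Finset.abs_sum_le_sum_abs _ _
    _ ≤ ∑ i, ‖x‖ * |v i| := by
        refine Finset.sum_le_sum fun i _ => ?_
        rw [abs_mul]
        exact mul_le_mul_of_nonneg_right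
          ((Real.norm_eq_abs (x i)) ▸ norm_le_pi_norm x i) (abs_nonneg _)
    _ = ‖x‖ * ∑ i, |v i| := by rw [Finset.mul_sum]

lemma continuous_dot {X : Type*} [TopologicalSpace X] {f g : X → (Fin n → ℝ)}
    (hf : Continuous f) (hg : Continuous g) : Continuous fun x => f x ⬝ᵥ g x := by
  simp only [dotProduct]
  exact continuous_finset_sum _ fun i _ =>
    ((continuous_apply i).comp hf).mul ((continuous_apply i).comp hg)

variable {μ : Measure (Fin n → ℝ)} {c : (Fin n → ℝ) → (Fin n → ℝ)}
  {g : (Fin n → ℝ) → ℝ} {R : ℝ}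

lemma integrable_prod_dot (hc : Measurable c) (hg : Integrable g μ)
    (hR : ∀ᵐ y ∂μ, ∑ i, |c y i| ≤ R) (k : ℕ) (m : Fin k → (Fin n → ℝ)) :
    Integrable (fun y => (∏ i, m i ⬝ᵥ c y) * g y) μ := by
  have hcont : Continuous fun v : Fin n → ℝ => ∏ i, m i ⬝ᵥ v :=
    continuous_finset_prod _ fun i _ => continuous_dot continuous_const continuous_id
  refine (hg.norm.const_mul ((∏ i, ‖m i‖) * R ^ k)).mono'
    (((hcont.measurable.comp hc).aestronglyMeasurable).mul hg.1) ?_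
  filter_upwards [hR] with y hy
  have hbd : |∏ i, m i ⬝ᵥ c y| ≤ (∏ i, ‖m i‖) * R ^ k := by
    rw [Finset.abs_prod]
    calc ∏ i, |m i ⬝ᵥ c y| ≤ ∏ i, (‖m i‖ * R) :=
          Finset.prod_le_prod (fun i _ => abs_nonneg _) fun i _ =>
            (abs_dotProduct_le _ _).trans (mul_le_mul_of_nonneg_left hy (norm_nonneg _))
      _ = (∏ i, ‖m i‖) * R ^ k := by
          rw [Finset.prod_mul_distrib, Finset.prod_const, Finset.card_univ, Fintype.card_fin]
  rw [norm_mul, Real.norm_eq_abs (∏ i, m i ⬝ᵥ c y)]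
  exact mul_le_mul_of_nonneg_right hbd (norm_nonneg _)

/-- The candidate power series (at `0`) of `x ↦ ∫ exp (x ⬝ᵥ c y) * g y ∂μ`. -/
noncomputable def pSeries (μ : Measure (Fin n → ℝ)) (c : (Fin n → ℝ) → (Fin n → ℝ))
    (g : (Fin n → ℝ) → ℝ) (hc : Measurable c) (hg : Integrable g μ) {R : ℝ}
    (hR : ∀ᵐ y ∂μ, ∑ i, |c y i| ≤ R) (hR0 : 0 ≤ R) :
    FormalMultilinearSeries ℝ (Fin n → ℝ) ℝ := fun k =>
  MultilinearMap.mkContinuous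
    { toFun := fun m => (k ! : ℝ)⁻¹ * ∫ y, (∏ i, m i ⬝ᵥ c y) * g y ∂μ
      map_update_add' := by
        intro inst m i a b
        have key : ∀ x : Fin n → ℝ, (fun y => (∏ j, Function.update m i x j ⬝ᵥ c y) * g y)
            = fun y => ((x ⬝ᵥ c y) * ∏ j ∈ Finset.univ \ {i}, m j ⬝ᵥ c y) * g y := by
          intro x; funext y
          congr 1
          have : (fun j => Function.update m i x j ⬝ᵥ c y)
              = Function.update (fun j => m j ⬝ᵥ c y) i (x ⬝ᵥ c y) :=
            funext fun j => Function.apply_update (fun _ u => u ⬝ᵥ c y) m i x j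
          rw [show (∏ j, Function.update m i x j ⬝ᵥ c y)
              = ∏ j, Function.update (fun j => m j ⬝ᵥ c y) i (x ⬝ᵥ c y) j by rw [this],
            Finset.prod_update_of_mem (Finset.mem_univ i)]
        have hint : ∀ x : Fin n → ℝ,
            Integrable (fun y => ((x ⬝ᵥ c y) * ∏ j ∈ Finset.univ \ {i}, m j ⬝ᵥ c y) * g y) μ :=
          fun x => (key x) ▸ integrable_prod_dot hc hg hR k (Function.update m i x)
        simp only [key]
        have : (fun y => (((a + b) ⬝ᵥ c y) * ∏ j ∈ Finset.univ \ {i}, m j ⬝ᵥ c y) * g y)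
            = fun y => ((a ⬝ᵥ c y) * ∏ j ∈ Finset.univ \ {i}, m j ⬝ᵥ c y) * g y
              + ((b ⬝ᵥ c y) * ∏ j ∈ Finset.univ \ {i}, m j ⬝ᵥ c y) * g y := by
          funext y; rw [add_dotProduct]; ring
        rw [this, integral_add (hint a) (hint b), mul_add]
      map_update_smul' := by
        intro inst m i s a
        have key : ∀ x : Fin n → ℝ, (fun y => (∏ j, Function.update m i x j ⬝ᵥ c y) * g y)
            = fun y => ((x ⬝ᵥ c y) * ∏ j ∈ Finset.univ \ {i}, m j ⬝ᵥ c y) * g y := by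
          intro x; funext y
          congr 1
          have : (fun j => Function.update m i x j ⬝ᵥ c y)
              = Function.update (fun j => m j ⬝ᵥ c y) i (x ⬝ᵥ c y) :=
            funext fun j => Function.apply_update (fun _ u => u ⬝ᵥ c y) m i x j
          rw [show (∏ j, Function.update m i x j ⬝ᵥ c y)
              = ∏ j, Function.update (fun j => m j ⬝ᵥ c y) i (x ⬝ᵥ c y) j by rw [this],
            Finset.prod_update_of_mem (Finset.mem_univ i)]
        simp only [key]
        have : (fun y => (((s • a) ⬝ᵥ c y) * ∏ j ∈ Finset.univ \ {i}, m j ⬝ᵥ c y) * g y)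
            = fun y => s * (((a ⬝ᵥ c y) * ∏ j ∈ Finset.univ \ {i}, m j ⬝ᵥ c y) * g y) := by
          funext y; rw [smul_dotProduct]; simp only [smul_eq_mul]; ring
        rw [this, integral_const_mul, smul_eq_mul]; ring }
    ((k ! : ℝ)⁻¹ * ((∫ y, |g y| ∂μ) * R ^ k))
    (by
      intro m
      simp only [MultilinearMap.coe_mk]
      have h1 : ‖∫ y, (∏ i, m i ⬝ᵥ c y) * g y ∂μ‖ ≤ ∫ y, ‖(∏ i, m i ⬝ᵥ c y) * g y‖ ∂μ :=
        norm_integral_le_integral_norm _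
      have h2 : ∫ y, ‖(∏ i, m i ⬝ᵥ c y) * g y‖ ∂μ
          ≤ ∫ y, ((∏ i, ‖m i‖) * R ^ k) * ‖g y‖ ∂μ := by
        refine integral_mono_ae (integrable_prod_dot hc hg hR k m).norm
          (hg.norm.const_mul _) ?_
        filter_upwards [hR] with y hy
        have hbd : |∏ i, m i ⬝ᵥ c y| ≤ (∏ i, ‖m i‖) * R ^ k := by
          rw [Finset.abs_prod]
          calc ∏ i, |m i ⬝ᵥ c y| ≤ ∏ i, (‖m i‖ * R) :=
                Finset.prod_le_prod (fun i _ => abs_nonneg _) fun i _ =>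
                  (abs_dotProduct_le _ _).trans
                    (mul_le_mul_of_nonneg_left hy (norm_nonneg _))
            _ = (∏ i, ‖m i‖) * R ^ k := by
                rw [Finset.prod_mul_distrib, Finset.prod_const, Finset.card_univ,
                  Fintype.card_fin]
        rw [norm_mul, Real.norm_eq_abs (∏ i, m i ⬝ᵥ c y)]
        exact mul_le_mul_of_nonneg_right hbd (norm_nonneg _)
      rw [norm_mul, Real.norm_eq_abs ((k ! : ℝ)⁻¹), abs_of_nonneg (by positivity)]
      calc (k ! : ℝ)⁻¹ * ‖∫ y, (∏ i, m i ⬝ᵥ c y) * g y ∂μ‖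
          ≤ (k ! : ℝ)⁻¹ * (((∏ i, ‖m i‖) * R ^ k) * ∫ y, ‖g y‖ ∂μ) := by
            refine mul_le_mul_of_nonneg_left ?_ (by positivity)
            rw [← integral_const_mul]
            exact h1.trans h2
        _ = (k ! : ℝ)⁻¹ * ((∫ y, |g y| ∂μ) * R ^ k) * ∏ i, ‖m i‖ := by
            simp only [Real.norm_eq_abs]; ring)

variable (μ c g)

lemma pSeries_norm_le (hc : Measurable c) (hg : Integrable g μ)
    (hR : ∀ᵐ y ∂μ, ∑ i, |c y i| ≤ R) (hR0 : 0 ≤ R) (k : ℕ) :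
    ‖pSeries μ c g hc hg hR hR0 k‖ ≤ (k ! : ℝ)⁻¹ * ((∫ y, |g y| ∂μ) * R ^ k) :=
  MultilinearMap.mkContinuous_norm_le _
    (by positivity) _

lemma pSeries_apply (hc : Measurable c) (hg : Integrable g μ)
    (hR : ∀ᵐ y ∂μ, ∑ i, |c y i| ≤ R) (hR0 : 0 ≤ R) (k : ℕ) (m : Fin k → (Fin n → ℝ)) :
    pSeries μ c g hc hg hR hR0 k m = (k ! : ℝ)⁻¹ * ∫ y, (∏ i, m i ⬝ᵥ c y) * g y ∂μ :=
  rfl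

lemma pSeries_radius (hc : Measurable c) (hg : Integrable g μ)
    (hR : ∀ᵐ y ∂μ, ∑ i, |c y i| ≤ R) (hR0 : 0 ≤ R) :
    (pSeries μ c g hc hg hR hR0).radius = ⊤ := by
  apply ENNReal.eq_top_of_forall_nnreal_le
  intro r
  apply FormalMultilinearSeries.le_radius_of_summable
  have hsum : Summable fun k : ℕ => (∫ y, |g y| ∂μ) * ((R * r) ^ k / k !) :=
    (Real.summable_pow_div_factorial (R * r)).mul_left _
  refine Summable.of_nonneg_of_le
    (fun k => mul_nonneg (norm_nonneg _) (pow_nonneg r.2 _)) (fun k => ?_) hsum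
  calc ‖pSeries μ c g hc hg hR hR0 k‖ * (r : ℝ) ^ k
      ≤ ((k ! : ℝ)⁻¹ * ((∫ y, |g y| ∂μ) * R ^ k)) * (r : ℝ) ^ k :=
        mul_le_mul_of_nonneg_right (pSeries_norm_le μ c g hc hg hR hR0 k)
          (pow_nonneg r.2 _)
    _ = (∫ y, |g y| ∂μ) * ((R * r) ^ k / k !) := by
        rw [mul_pow]; field_simp

lemma pSeries_hasSum (hc : Measurable c) (hg : Integrable g μ)
    (hR : ∀ᵐ y ∂μ, ∑ i, |c y i| ≤ R) (hR0 : 0 ≤ R) (x : Fin n → ℝ) :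
    HasSum (fun k => pSeries μ c g hc hg hR hR0 k fun _ => x)
      (∫ y, Real.exp (x ⬝ᵥ c y) * g y ∂μ) := by
  set F : ℕ → (Fin n → ℝ) → ℝ := fun k y => (k ! : ℝ)⁻¹ * ((x ⬝ᵥ c y) ^ k * g y) with hF
  have happ : ∀ k, (pSeries μ c g hc hg hR hR0 k fun _ => x) = ∫ y, F k y ∂μ := by
    intro k
    rw [pSeries_apply, ← integral_const_mul]
    congr 1; funext y
    rw [Finset.prod_const, Finset.card_univ, Fintype.card_fin]
  have hFint : ∀ k, Integrable (F k) μ := by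
    intro k
    have := integrable_prod_dot hc hg hR k (fun _ => x)
    simp only [Finset.prod_const, Finset.card_univ, Fintype.card_fin] at this
    simpa only [hF, mul_assoc] using this.const_mul ((k ! : ℝ)⁻¹)
  have hbound : ∀ k, ∫ y, ‖F k y‖ ∂μ
      ≤ (k ! : ℝ)⁻¹ * ((‖x‖ * R) ^ k * ∫ y, |g y| ∂μ) := by
    intro k
    have hb : ∀ᵐ y ∂μ, ‖F k y‖ ≤ (k ! : ℝ)⁻¹ * ((‖x‖ * R) ^ k * |g y|) := by
      filter_upwards [hR] with y hy
      have h1 : |x ⬝ᵥ c y| ≤ ‖x‖ * R :=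
        (abs_dotProduct_le _ _).trans (mul_le_mul_of_nonneg_left hy (norm_nonneg _))
      have h2 : |x ⬝ᵥ c y| ^ k ≤ (‖x‖ * R) ^ k :=
        pow_le_pow_left₀ (abs_nonneg _) h1 k
      calc ‖F k y‖ = (k ! : ℝ)⁻¹ * (|x ⬝ᵥ c y| ^ k * |g y|) := by
            rw [hF]; simp only [Real.norm_eq_abs, abs_mul, abs_pow,
              abs_of_nonneg (show (0:ℝ) ≤ (k ! : ℝ)⁻¹ by positivity)]
        _ ≤ (k ! : ℝ)⁻¹ * ((‖x‖ * R) ^ k * |g y|) := by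
            refine mul_le_mul_of_nonneg_left ?_ (by positivity)
            exact mul_le_mul_of_nonneg_right h2 (abs_nonneg _)
    calc ∫ y, ‖F k y‖ ∂μ ≤ ∫ y, (k ! : ℝ)⁻¹ * ((‖x‖ * R) ^ k * |g y|) ∂μ := by
          refine integral_mono_ae (hFint k).norm ?_ hb
          simpa only [mul_assoc] using (hg.abs.const_mul ((k ! : ℝ)⁻¹ * (‖x‖ * R) ^ k))
      _ = (k ! : ℝ)⁻¹ * ((‖x‖ * R) ^ k * ∫ y, |g y| ∂μ) := by
          rw [integral_const_mul, integral_const_mul]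
  have hsum2 : Summable fun k => ∫ y, ‖F k y‖ ∂μ := by
    have hs : Summable fun k : ℕ => (∫ y, |g y| ∂μ) * ((‖x‖ * R) ^ k / k !) :=
      (Real.summable_pow_div_factorial (‖x‖ * R)).mul_left _
    refine Summable.of_nonneg_of_le
      (fun k => integral_nonneg fun y => norm_nonneg _) (fun k => ?_) hs
    calc ∫ y, ‖F k y‖ ∂μ ≤ (k ! : ℝ)⁻¹ * ((‖x‖ * R) ^ k * ∫ y, |g y| ∂μ) := hbound k
      _ = (∫ y, |g y| ∂μ) * ((‖x‖ * R) ^ k / k !) := by field_simp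
  have hmain := MeasureTheory.hasSum_integral_of_summable_integral_norm hFint hsum2
  have htsum : ∀ y, (∑' k, F k y) = Real.exp (x ⬝ᵥ c y) * g y := by
    intro y
    have hexp : HasSum (fun k => F k y) (Real.exp (x ⬝ᵥ c y) * g y) := by
      have h0 := (NormedSpace.exp_series_hasSum_exp' (𝕂 := ℝ) (x ⬝ᵥ c y)).mul_right (g y)
      rw [← Real.exp_eq_exp_ℝ] at h0
      simpa only [hF, smul_eq_mul, mul_assoc] using h0
    exact hexp.tsum_eq
  have : (∫ y, (∑' k, F k y) ∂μ) = ∫ y, Real.exp (x ⬝ᵥ c y) * g y ∂μ := by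
    congr 1; funext y; exact htsum y
  rw [← this]
  rw [show (fun k => pSeries μ c g hc hg hR hR0 k fun _ => x) = fun k => ∫ y, F k y ∂μ
    from funext happ]
  exact hmain

lemma analyticAt_zero (hc : Measurable c) (hg : Integrable g μ)
    (hR : ∀ᵐ y ∂μ, ∑ i, |c y i| ≤ R) (hR0 : 0 ≤ R) :
    AnalyticAt ℝ (fun x => ∫ y, Real.exp (x ⬝ᵥ c y) * g y ∂μ) 0 := by
  have hball : HasFPowerSeriesOnBall (fun x => ∫ y, Real.exp (x ⬝ᵥ c y) * g y ∂μ)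
      (pSeries μ c g hc hg hR hR0) 0 ⊤ :=
    { r_le := by rw [pSeries_radius]
      r_pos := ENNReal.zero_lt_top
      hasSum := fun {z} _ => by
        simpa only [zero_add] using pSeries_hasSum μ c g hc hg hR hR0 z }
  exact hball.analyticAt

lemma analyticOnNhd_integral_exp (hc : Measurable c) (hg : Integrable g μ)
    (hR : ∀ᵐ y ∂μ, ∑ i, |c y i| ≤ R) (hR0 : 0 ≤ R) :
    AnalyticOnNhd ℝ (fun x => ∫ y, Real.exp (x ⬝ᵥ c y) * g y ∂μ) Set.univ := by
  intro x₀ _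
  set g' : (Fin n → ℝ) → ℝ := fun y => Real.exp (x₀ ⬝ᵥ c y) * g y with hg'def
  have hg' : Integrable g' μ := by
    refine (hg.norm.const_mul (Real.exp (‖x₀‖ * R))).mono' ?_ ?_
    · exact ((Real.continuous_exp.comp
        (continuous_dot continuous_const continuous_id)).measurable.comp hc
          |>.aestronglyMeasurable.mul hg.1)
    · filter_upwards [hR] with y hy
      rw [hg'def, norm_mul, Real.norm_eq_abs (Real.exp _),
        abs_of_nonneg (Real.exp_nonneg _)]
      refine mul_le_mul_of_nonneg_right ?_ (norm_nonneg _)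
      refine Real.exp_le_exp.2 ?_
      exact (le_abs_self _).trans
        ((abs_dotProduct_le _ _).trans (mul_le_mul_of_nonneg_left hy (norm_nonneg _)))
  have hA0 : AnalyticAt ℝ (fun z => ∫ y, Real.exp (z ⬝ᵥ c y) * g' y ∂μ) 0 :=
    analyticAt_zero μ c g' hc hg' hR hR0
  have key : (fun x => ∫ y, Real.exp (x ⬝ᵥ c y) * g y ∂μ)
      = (fun z => ∫ y, Real.exp (z ⬝ᵥ c y) * g' y ∂μ) ∘ fun x => x - x₀ := by
    funext x
    simp only [Function.comp_apply]
    congr 1; funext y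
    rw [hg'def, sub_dotProduct, ← mul_assoc, ← Real.exp_add, sub_add_cancel]
  rw [key]
  have hsub : AnalyticAt ℝ (fun x : Fin n → ℝ => x - x₀) x₀ :=
    analyticAt_id.sub analyticAt_const
  have : AnalyticAt ℝ (fun z => ∫ y, Real.exp (z ⬝ᵥ c y) * g' y ∂μ)
      ((fun x : Fin n → ℝ => x - x₀) x₀) := by
    simpa only [sub_self] using hA0
  exact AnalyticAt.comp (f := fun x : Fin n → ℝ => x - x₀) this hsub

end PoissonAux

/-- for fixed `t > 0`, the Poisson-type integral
`x ↦ ∫_Ω Ψ_M(x,y,t) h(y) dy` is real-analytic on all of `ℝⁿ`. -/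
theorem poisson_integral_analytic
    (n : ℕ) (hn : 1 ≤ n) (M : Matrix (Fin n) (Fin n) ℝ) (hM : M.PosDef)
    (t : ℝ) (ht : 0 < t)
    (Ω : Set (Fin n → ℝ)) (hΩmeas : MeasurableSet Ω) (hΩbd : IsBounded Ω)
    (h : (Fin n → ℝ) → ℝ) (hh : IntegrableOn h Ω) :
    AnalyticOnNhd ℝ (fun x => ∫ y in Ω, gaussKernel n M x y t * h y) Set.univ := by
  classical
  set A := M⁻¹ with hA_def
  have hA : A.PosDef := hM.inv
  have hMt : Mᵀ = M := by
    rw [← Matrix.conjTranspose_eq_transpose_of_trivial]; exact hM.1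
  have hAt : Aᵀ = A := by rw [hA_def, Matrix.transpose_nonsing_inv, hMt]
  have hsymm : ∀ x y : Fin n → ℝ, x ⬝ᵥ A.mulVec y = y ⬝ᵥ A.mulVec x := by
    intro x y
    rw [Matrix.dotProduct_mulVec x A y, ← Matrix.mulVec_transpose, hAt, dotProduct_comm]
  have hexpand : ∀ x y : Fin n → ℝ,
      (x - y) ⬝ᵥ A.mulVec (x - y)
        = x ⬝ᵥ A.mulVec x - 2 * (x ⬝ᵥ A.mulVec y) + y ⬝ᵥ A.mulVec y := by
    intro x y
    rw [Matrix.mulVec_sub, dotProduct_sub, sub_dotProduct, sub_dotProduct, hsymm y x]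
    ring
  set C : ℝ := (2 * Real.sqrt (Real.pi * M.det * t)) ^ (-(n : ℤ)) with hC
  set c : (Fin n → ℝ) → (Fin n → ℝ) := fun y => (2 * t)⁻¹ • (A.mulVec y) with hc_def
  set g0 : (Fin n → ℝ) → ℝ :=
    fun y => Real.exp (-(y ⬝ᵥ A.mulVec y) / (4 * t)) * h y with hg0
  have hxc : ∀ x y : Fin n → ℝ, x ⬝ᵥ c y = (2 * t)⁻¹ * (x ⬝ᵥ A.mulVec y) := by
    intro x y
    rw [hc_def]
    simp only [dotProduct_smul, smul_eq_mul]
  have hker : ∀ x y : Fin n → ℝ, gaussKernel n M x y t * h y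
      = (C * Real.exp (-(x ⬝ᵥ A.mulVec x) / (4 * t)))
          * (Real.exp (x ⬝ᵥ c y) * g0 y) := by
    intro x y
    have hsplit : Real.exp (-((x - y) ⬝ᵥ A.mulVec (x - y)) / (4 * t))
        = Real.exp (-(x ⬝ᵥ A.mulVec x) / (4 * t))
          * (Real.exp (x ⬝ᵥ c y) * Real.exp (-(y ⬝ᵥ A.mulVec y) / (4 * t))) := by
      rw [hxc, ← Real.exp_add, ← Real.exp_add, hexpand x y]
      congr 1
      field_simp
      ring
    simp only [gaussKernel, hg0]
    rw [← hA_def, hsplit, ← hC]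
    ring
  have hrw : (fun x => ∫ y in Ω, gaussKernel n M x y t * h y)
      = fun x => (C * Real.exp (-(x ⬝ᵥ A.mulVec x) / (4 * t)))
          * ∫ y in Ω, Real.exp (x ⬝ᵥ c y) * g0 y := by
    funext x
    simp_rw [hker x]
    rw [integral_const_mul]
  rw [hrw]
  have hQ : AnalyticOnNhd ℝ
      (fun x : Fin n → ℝ => C * Real.exp (-(x ⬝ᵥ A.mulVec x) / (4 * t))) Set.univ := by
    intro x _
    have h1 : AnalyticAt ℝ (fun x : Fin n → ℝ => x ⬝ᵥ A.mulVec x) x := by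
      have heq : (fun x : Fin n → ℝ => x ⬝ᵥ A.mulVec x)
          = fun x : Fin n → ℝ => ∑ i, x i * ∑ j, A i j * x j := rfl
      rw [heq]
      refine Finset.analyticAt_fun_sum _ fun i _ => ?_
      refine AnalyticAt.mul ?_ ?_
      · exact (ContinuousLinearMap.proj i : (Fin n → ℝ) →L[ℝ] ℝ).analyticAt x
      · refine Finset.analyticAt_fun_sum _ fun j _ => ?_
        exact analyticAt_const.mul
          ((ContinuousLinearMap.proj j : (Fin n → ℝ) →L[ℝ] ℝ).analyticAt x)
    have h2 : AnalyticAt ℝ (fun x : Fin n → ℝ => -(x ⬝ᵥ A.mulVec x) / (4 * t)) x :=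
      h1.neg.div analyticAt_const (by positivity)
    exact analyticAt_const.mul h2.rexp
  have hmulVec : Continuous fun y : Fin n → ℝ => A.mulVec y := by
    refine continuous_pi fun i => ?_
    show Continuous fun y : Fin n → ℝ => (fun j => A i j) ⬝ᵥ y
    exact PoissonAux.continuous_dot continuous_const continuous_id
  have hccont : Continuous c := by
    rw [hc_def]; exact hmulVec.const_smul ((2 * t)⁻¹ : ℝ)
  obtain ⟨r, hr⟩ := hΩbd.subset_closedBall 0
  have hScont : Continuous fun y => ∑ i, |c y i| :=
    continuous_finset_sum _ fun i _ => ((continuous_apply i).comp hccont).abs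
  obtain ⟨B, hB⟩ := (isCompact_closedBall (0 : Fin n → ℝ) r).exists_bound_of_continuousOn
    hScont.continuousOn
  have hRae : ∀ᵐ y ∂(volume.restrict Ω), ∑ i, |c y i| ≤ max B 0 := by
    refine ae_restrict_of_forall_mem hΩmeas fun y hy => ?_
    calc ∑ i, |c y i| ≤ abs (∑ i, |c y i|) := le_abs_self _
      _ ≤ B := by simpa [Real.norm_eq_abs] using hB y (hr hy)
      _ ≤ max B 0 := le_max_left _ _
  have hg0int : Integrable g0 (volume.restrict Ω) := by
    have hQc : Continuous fun y : Fin n → ℝ => y ⬝ᵥ A.mulVec y :=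
      PoissonAux.continuous_dot continuous_id hmulVec
    refine hh.norm.mono' ?_ ?_
    · rw [hg0]
      exact ((Real.continuous_exp.comp (hQc.neg.div_const (4 * t))).aestronglyMeasurable.mul
        hh.1)
    · refine Filter.Eventually.of_forall fun y => ?_
      rw [hg0]
      simp only []
      rw [norm_mul, Real.norm_eq_abs (Real.exp _), abs_of_nonneg (Real.exp_nonneg _)]
      have hQpos : 0 ≤ y ⬝ᵥ A.mulVec y := by simpa using hA.posSemidef.dotProduct_mulVec_nonneg y
      have hle1 : Real.exp (-(y ⬝ᵥ A.mulVec y) / (4 * t)) ≤ 1 := by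
        rw [Real.exp_le_one_iff]
        exact div_nonpos_of_nonpos_of_nonneg (neg_nonpos.2 hQpos) (by positivity)
      exact mul_le_of_le_one_left (norm_nonneg _) hle1
  exact hQ.mul (PoissonAux.analyticOnNhd_integral_exp (volume.restrict Ω) c g0
    hccont.measurable hg0int hRae (le_max_right _ _))
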